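/- Let f : ℝ → [0,∞) be measurable and upper semicontinuous, with v_f(θ,x) < ∞ for all (θ,x) ∈ [0,T]×ℝ. Then the embedded American payoff x ↦ am_T(f)(x) := inf_{θ∈[0,T]} v_f(θ,x) is upper semicontinuous on ℝ. -/

import Mathlib

open MeasureTheory Filter Set
open scoped ENNReal

/-- Gaussian density with mean `m` and variance `s2`. -/
noncomputable def gauss (m s2 y : ℝ) : ℝ :=
  (Real.sqrt (2 * Real.pi * s2))⁻¹ * Real.exp (-((y - m) ^ 2) / (2 * s2))

/-- European value of a payoff function `f`:
`v_f(θ,x) = e^{-rθ} ∫ N(x+r̂θ,σ²θ,y) f(y) dy` for `θ > 0`, `v_f(0,x) = f(x)`. -/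
noncomputable def vEu (r σ : ℝ) (f : ℝ → ℝ) (θ x : ℝ) : ℝ :=
  if θ = 0 then f x
  else Real.exp (-(r * θ)) * ∫ y, gauss (x + (r - σ ^ 2 / 2) * θ) (σ ^ 2 * θ) y * f y

lemma gauss_nonneg (m s2 y : ℝ) : 0 ≤ gauss m s2 y :=
  mul_nonneg (inv_nonneg.2 (Real.sqrt_nonneg _)) (Real.exp_pos _).le

lemma gauss_continuous_mean (s2 y : ℝ) : Continuous (fun m => gauss m s2 y) := by
  unfold gauss
  fun_prop

/-- Key domination estimate: for means within distance 1 of `m₀`, the Gaussian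
density is dominated by a fixed combination of two Gaussians. -/
lemma gauss_bound (s2 : ℝ) (hs2 : 0 < s2) (m m₀ y : ℝ) (hm : |m - m₀| ≤ 1) :
    gauss m s2 y ≤
      Real.exp (1 / (2 * s2)) * (gauss (m₀ + 1) s2 y + gauss (m₀ - 1) s2 y) := by
  obtain ⟨hm1, hm2⟩ := abs_le.1 hm
  have hs2' : 0 < 2 * s2 := by linarith
  have hA : (0:ℝ) ≤ (Real.sqrt (2 * Real.pi * s2))⁻¹ :=
    inv_nonneg.2 (Real.sqrt_nonneg _)
  unfold gauss
  have key : Real.exp (-((y - m) ^ 2) / (2 * s2)) ≤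
      Real.exp (1 / (2 * s2)) *
        (Real.exp (-((y - (m₀ + 1)) ^ 2) / (2 * s2)) +
         Real.exp (-((y - (m₀ - 1)) ^ 2) / (2 * s2))) := by
    rcases le_or_gt m₀ y with hy | hy
    · have h1 : (y - (m₀ + 1)) ^ 2 ≤ (y - m) ^ 2 + 1 := by
        nlinarith [sq_nonneg (m - m₀), mul_nonneg (sub_nonneg.2 hy) (sub_nonneg.2 hm2)]
      have : Real.exp (-((y - m) ^ 2) / (2 * s2)) ≤
          Real.exp (1 / (2 * s2)) * Real.exp (-((y - (m₀ + 1)) ^ 2) / (2 * s2)) := by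
        rw [← Real.exp_add]
        apply Real.exp_le_exp.2
        rw [← add_div, div_le_div_iff₀ hs2' hs2']
        nlinarith
      calc Real.exp (-((y - m) ^ 2) / (2 * s2)) ≤
          Real.exp (1 / (2 * s2)) * Real.exp (-((y - (m₀ + 1)) ^ 2) / (2 * s2)) := this
        _ ≤ _ := by
            rw [mul_add]
            exact le_add_of_nonneg_right (mul_nonneg (Real.exp_pos _).le (Real.exp_pos _).le)
    · have h2 : (y - (m₀ - 1)) ^ 2 ≤ (y - m) ^ 2 + 1 := by
        nlinarith [sq_nonneg (m - m₀), mul_nonneg (sub_nonneg.2 hy.le) (sub_nonneg.2 (by linarith : -1 ≤ m - m₀))]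
      have : Real.exp (-((y - m) ^ 2) / (2 * s2)) ≤
          Real.exp (1 / (2 * s2)) * Real.exp (-((y - (m₀ - 1)) ^ 2) / (2 * s2)) := by
        rw [← Real.exp_add]
        apply Real.exp_le_exp.2
        rw [← add_div, div_le_div_iff₀ hs2' hs2']
        nlinarith
      calc Real.exp (-((y - m) ^ 2) / (2 * s2)) ≤
          Real.exp (1 / (2 * s2)) * Real.exp (-((y - (m₀ - 1)) ^ 2) / (2 * s2)) := this
        _ ≤ _ := by
            rw [mul_add]
            exact le_add_of_nonneg_left (mul_nonneg (Real.exp_pos _).le (Real.exp_pos _).le)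
  calc (Real.sqrt (2 * Real.pi * s2))⁻¹ * Real.exp (-((y - m) ^ 2) / (2 * s2))
      ≤ (Real.sqrt (2 * Real.pi * s2))⁻¹ *
        (Real.exp (1 / (2 * s2)) *
          (Real.exp (-((y - (m₀ + 1)) ^ 2) / (2 * s2)) +
           Real.exp (-((y - (m₀ - 1)) ^ 2) / (2 * s2)))) :=
        mul_le_mul_of_nonneg_left key hA
    _ = _ := by ring

lemma vEu_nonneg (r σ : ℝ) (f : ℝ → ℝ) (hf0 : ∀ x, 0 ≤ f x) (θ x : ℝ) :
    0 ≤ vEu r σ f θ x := by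
  unfold vEu
  split
  · exact hf0 x
  · exact mul_nonneg (Real.exp_pos _).le
      (integral_nonneg fun y => mul_nonneg (gauss_nonneg _ _ _) (hf0 y))

lemma vEu_continuous (r σ T : ℝ) (hσ : 0 < σ)
    (f : ℝ → ℝ) (hfm : Measurable f) (hf0 : ∀ x, 0 ≤ f x)
    (hfint : ∀ θ ∈ Set.Ioc (0 : ℝ) T, ∀ x : ℝ,
      Integrable (fun y => gauss (x + (r - σ ^ 2 / 2) * θ) (σ ^ 2 * θ) y * f y))
    (θ : ℝ) (hθ : θ ∈ Set.Ioc (0 : ℝ) T) :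
    Continuous (fun x => vEu r σ f θ x) := by
  have hθ0 : θ ≠ 0 := ne_of_gt hθ.1
  have heq : (fun x => vEu r σ f θ x) = fun x =>
      Real.exp (-(r * θ)) *
        ∫ y, gauss (x + (r - σ ^ 2 / 2) * θ) (σ ^ 2 * θ) y * f y := by
    funext x; simp [vEu, hθ0]
  rw [heq]
  set c := (r - σ ^ 2 / 2) * θ with hc
  set s2 := σ ^ 2 * θ with hs2def
  have hs2 : 0 < s2 := mul_pos (pow_pos hσ 2) hθ.1
  refine continuous_const.mul ?_
  rw [continuous_iff_continuousAt]
  intro x₀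
  set K := Real.exp (1 / (2 * s2)) with hK
  apply continuousAt_of_dominated
    (bound := fun y => K * ((gauss (x₀ + c + 1) s2 y + gauss (x₀ + c - 1) s2 y) * f y))
  · exact Eventually.of_forall fun x => (hfint θ hθ x).aestronglyMeasurable
  · filter_upwards [Metric.closedBall_mem_nhds x₀ one_pos] with x hx
    refine Eventually.of_forall fun y => ?_
    rw [Real.norm_of_nonneg (mul_nonneg (gauss_nonneg _ _ _) (hf0 y))]
    have hdist : |x + c - (x₀ + c)| ≤ 1 := by
      have := Metric.mem_closedBall.1 hx
      rw [Real.dist_eq] at this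
      simpa using this
    have hb := gauss_bound s2 hs2 (x + c) (x₀ + c) y hdist
    calc gauss (x + c) s2 y * f y
        ≤ (K * (gauss (x₀ + c + 1) s2 y + gauss (x₀ + c - 1) s2 y)) * f y :=
          mul_le_mul_of_nonneg_right hb (hf0 y)
      _ = K * ((gauss (x₀ + c + 1) s2 y + gauss (x₀ + c - 1) s2 y) * f y) := by ring
  · have h1 : Integrable (fun y => gauss (x₀ + c + 1) s2 y * f y) := by
      have := hfint θ hθ (x₀ + 1)
      have he : x₀ + 1 + c = x₀ + c + 1 := by ring
      rw [hc, hs2def] at *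
      simpa [he] using this
    have h2 : Integrable (fun y => gauss (x₀ + c - 1) s2 y * f y) := by
      have := hfint θ hθ (x₀ - 1)
      have he : x₀ - 1 + c = x₀ + c - 1 := by ring
      rw [hc, hs2def] at *
      simpa [he] using this
    have : Integrable (fun y =>
        gauss (x₀ + c + 1) s2 y * f y + gauss (x₀ + c - 1) s2 y * f y) := h1.add h2
    exact (this.const_mul K).congr (Eventually.of_forall fun y => by ring)
  · refine Eventually.of_forall fun y => ?_
    exact (((gauss_continuous_mean s2 y).comp (continuous_id.add continuous_const)).mul
      continuous_const).continuousAt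

/-- If `f` is a nonnegative, measurable, upper semicontinuous
payoff whose European value is finite on `[0,T] × ℝ`, then the embedded
American payoff `am_T(f)(x) = inf_{θ∈[0,T]} v_f(θ,x)` is upper semicontinuous. -/
theorem embedded_American_upperSemicontinuous
    (r σ T : ℝ) (hr : 0 ≤ r) (hσ : 0 < σ) (hT : 0 < T)
    (f : ℝ → ℝ) (hfm : Measurable f) (hf0 : ∀ x, 0 ≤ f x)
    (hfusc : UpperSemicontinuous f)
    (hfint : ∀ θ ∈ Set.Ioc (0 : ℝ) T, ∀ x : ℝ,
      Integrable (fun y => gauss (x + (r - σ ^ 2 / 2) * θ) (σ ^ 2 * θ) y * f y)) :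
    UpperSemicontinuous (fun x => ⨅ θ : Set.Icc (0 : ℝ) T, vEu r σ f θ.1 x) := by
  intro x y hy
  have hne : Nonempty (Set.Icc (0 : ℝ) T) := ⟨⟨0, le_refl 0, hT.le⟩⟩
  obtain ⟨θ, hθlt⟩ := exists_lt_of_ciInf_lt hy
  have husc : UpperSemicontinuousAt (fun x => vEu r σ f θ.1 x) x := by
    rcases eq_or_lt_of_le θ.2.1 with h0 | hpos
    · have : (fun x => vEu r σ f θ.1 x) = f := by
        funext z; simp [vEu, ← h0]
      rw [this]; exact hfusc x
    · exact ((vEu_continuous r σ T hσ f hfm hf0 hfint θ.1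
        ⟨hpos, θ.2.2⟩).upperSemicontinuous) x
  filter_upwards [husc y hθlt] with x' hx'
  refine lt_of_le_of_lt ?_ hx'
  exact ciInf_le ⟨0, by rintro _ ⟨θ', rfl⟩; exact vEu_nonneg r σ f hf0 θ'.1 x'⟩ θ
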